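/- Let G be a finite simple connected graph and f : V_G → ℝ with f(u) = 0 for some vertex u and f not identically zero. Then there exist adjacent vertices u', v' with f(u') = 0 and f(v') ≠ 0, and the partial signing g agreeing with f everywhere except g(u') = f(v') satisfies WND(f) ≤ WND(g) and SND(g) ≤ SND(f). -/
import Mathlib


open SimpleGraph

/-- The number of strong nodal domains of `f`: connected components of the subgraph
induced on the positive set plus those of the subgraph induced on the negative set. -/
noncomputable def SND {V : Type*} (G : SimpleGraph V) (f : V → ℝ) : ℕ :=
  Nat.card ((G.induce {v | 0 < f v}).ConnectedComponent) +
  Nat.card ((G.induce {v | f v < 0}).ConnectedComponent)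

/-- The number of weak nodal domains of `f`: connected components of the subgraph
induced on `{f ≥ 0}` (resp. `{f ≤ 0}`) containing at least one vertex where `f ≠ 0`. -/
noncomputable def WND {V : Type*} (G : SimpleGraph V) (f : V → ℝ) : ℕ :=
  Nat.card {c : (G.induce {v | 0 ≤ f v}).ConnectedComponent //
      ∃ v : {v | 0 ≤ f v}, (G.induce {v | 0 ≤ f v}).connectedComponentMk v = c ∧ f v.1 ≠ 0} +
  Nat.card {c : (G.induce {v | f v ≤ 0}).ConnectedComponent //
      ∃ v : {v | f v ≤ 0}, (G.induce {v | f v ≤ 0}).connectedComponentMk v = c ∧ f v.1 ≠ 0}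

/-- `g` is a partial signing of `f`: strictly positive where `f` is positive and strictly
negative where `f` is negative. -/
def IsPartialSigning {V : Type*} (f g : V → ℝ) : Prop :=
  ∀ v, (0 < f v → 0 < g v) ∧ (f v < 0 → g v < 0)

/-- `g` is a signing of `f`: a nowhere-zero partial signing of `f`. -/
def IsSigning {V : Type*} (f g : V → ℝ) : Prop :=
  (∀ v, g v ≠ 0) ∧ IsPartialSigning f g

/-- The Urschel number of `f`: the minimum number of strong nodal domains over all
signings of `f`. -/
noncomputable def UN {V : Type*} (G : SimpleGraph V) (f : V → ℝ) : ℕ :=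
  sInf (SND G '' {g | IsSigning f g})

def inclHom {V : Type*} (G : SimpleGraph V) {S T : Set V} (h : S ⊆ T) :
    G.induce S →g G.induce T :=
  ⟨Set.inclusion h, fun {_ _} hab => hab⟩

lemma SND_neg {V : Type*} (G : SimpleGraph V) (f : V → ℝ) : SND G (-f) = SND G f := by
  have h1 : {v | 0 < (-f) v} = {v | f v < 0} := by ext v; simp
  have h2 : {v | (-f) v < 0} = {v | 0 < f v} := by ext v; simp
  unfold SND
  rw [h1, h2, add_comm]

lemma WND_neg {V : Type*} (G : SimpleGraph V) (f : V → ℝ) : WND G (-f) = WND G f := by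
  have h1 : {v | 0 ≤ (-f) v} = {v | f v ≤ 0} := by ext v; simp
  have h2 : {v | (-f) v ≤ 0} = {v | 0 ≤ f v} := by ext v; simp
  unfold WND
  rw [h1, h2]
  simp only [Pi.neg_apply, ne_eq, neg_eq_zero]
  exact add_comm _ _

lemma exists_edge {V : Type*} (G : SimpleGraph V) (f : V → ℝ) {a b : V} (p : G.Walk a b) :
    ∀ (_ : f a = 0) (_ : f b ≠ 0),
    ∃ u' v' : V, G.Adj u' v' ∧ f u' = 0 ∧ f v' ≠ 0 := by
  induction p with
  | nil => exact fun ha hb => absurd ha hb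
  | @cons x y z hadj p ih =>
    intro ha hb
    by_cases hy : f y = 0
    · exact ih hy hb
    · exact ⟨x, y, hadj, ha, hy⟩

lemma snd_aux {V : Type*} [Fintype V] (G : SimpleGraph V) (S : Set V) (u' v' : V)
    (hadj : G.Adj u' v') (hv' : v' ∈ S) :
    Nat.card ((G.induce (S ∪ {u'})).ConnectedComponent) ≤
      Nat.card ((G.induce S).ConnectedComponent) := by
  apply Nat.card_le_card_of_surjective
    (ConnectedComponent.map (inclHom G (Set.subset_union_left)))
  intro c
  induction c using ConnectedComponent.ind with
  | _ x =>
    obtain ⟨x, hx | hx⟩ := x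
    · exact ⟨(G.induce S).connectedComponentMk ⟨x, hx⟩, rfl⟩
    · refine ⟨(G.induce S).connectedComponentMk ⟨v', hv'⟩, ?_⟩
      rw [ConnectedComponent.map_mk]
      apply ConnectedComponent.sound
      have : (G.induce (S ∪ {u'})).Adj ⟨v', Or.inl hv'⟩ ⟨x, Or.inr hx⟩ := by
        simp only [Set.mem_singleton_iff] at hx
        subst hx
        exact hadj.symm
      exact this.reachable

lemma wnd_aux {V : Type*} [Fintype V] (G : SimpleGraph V) (S T : Set V) (hTS : T ⊆ S)
    (p q : V → Prop) (h : ∀ v, v ∈ S → p v → v ∈ T ∧ q v) :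
    Nat.card {c : (G.induce S).ConnectedComponent //
        ∃ v : S, (G.induce S).connectedComponentMk v = c ∧ p v.1} ≤
    Nat.card {c : (G.induce T).ConnectedComponent //
        ∃ v : T, (G.induce T).connectedComponentMk v = c ∧ q v.1} := by
  refine Nat.card_le_card_of_injective (fun x =>
    ⟨(G.induce T).connectedComponentMk
        ⟨(Classical.choose x.2).1,
          (h _ (Classical.choose x.2).2 (Classical.choose_spec x.2).2).1⟩,
      ⟨_, rfl, (h _ (Classical.choose x.2).2 (Classical.choose_spec x.2).2).2⟩⟩) ?_
  rintro ⟨c₁, h₁⟩ ⟨c₂, h₂⟩ hF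
  have hF' : (G.induce T).connectedComponentMk
      ⟨(Classical.choose h₁).1, (h _ (Classical.choose h₁).2 (Classical.choose_spec h₁).2).1⟩ =
      (G.induce T).connectedComponentMk
      ⟨(Classical.choose h₂).1, (h _ (Classical.choose h₂).2 (Classical.choose_spec h₂).2).1⟩ :=
    congrArg Subtype.val hF
  have hw₁ := Classical.choose_spec h₁
  have hw₂ := Classical.choose_spec h₂
  have hr := ConnectedComponent.exact hF'
  have hr' := hr.map (inclHom G hTS)
  have hmk : (G.induce S).connectedComponentMk (Classical.choose h₁) =
      (G.induce S).connectedComponentMk (Classical.choose h₂) := by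
    have := ConnectedComponent.sound hr'
    convert this using 2 <;> exact Subtype.ext rfl
  apply Subtype.ext
  show c₁ = c₂
  rw [← hw₁.1, ← hw₂.1, hmk]

lemma main_lemma {V : Type*} [Fintype V] [DecidableEq V] (G : SimpleGraph V) (f : V → ℝ)
    (u' v' : V) (hadj : G.Adj u' v') (hu' : f u' = 0) (hv' : 0 < f v') :
    WND G f ≤ WND G (Function.update f u' (f v')) ∧
      SND G (Function.update f u' (f v')) ≤ SND G f := by
  set g := Function.update f u' (f v') with hgdef
  have hgu : g u' = f v' := Function.update_self _ _ _
  have hgv : ∀ v, v ≠ u' → g v = f v := fun v h => Function.update_of_ne h _ _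
  have hgval : ∀ v, g v = f v ∨ (v = u' ∧ g v = f v') := fun v => by
    by_cases h : v = u'
    · exact Or.inr ⟨h, h ▸ hgu⟩
    · exact Or.inl (hgv v h)
  have hP : {v | 0 < g v} = {v | 0 < f v} ∪ {u'} := by
    ext v
    by_cases h : v = u' <;>
      simp [h, hgu, hgv v, hv', hu']
  have hN : {v | g v < 0} = {v | f v < 0} := by
    ext v
    by_cases h : v = u' <;>
      simp [h, hgu, hgv v, hu', not_lt.2 hv'.le, lt_irrefl]
  have hNN : {v | 0 ≤ g v} = {v | 0 ≤ f v} := by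
    ext v
    by_cases h : v = u' <;>
      simp [h, hgu, hgv v, hu', hv'.le]
  have hNP : {v | g v ≤ 0} = {v | f v ≤ 0} \ {u'} := by
    ext v
    by_cases h : v = u' <;>
      simp [h, hgu, hgv v, hu', not_le.2 hv']
  constructor
  · unfold WND
    rw [hNN, hNP]
    refine Nat.add_le_add ?_ ?_
    · refine wnd_aux G _ _ subset_rfl (fun v => f v ≠ 0) (fun v => g v ≠ 0) ?_
      intro v hv hne
      have hvu : v ≠ u' := fun h => hne (h ▸ hu')
      exact ⟨hv, by show g v ≠ 0; rwa [hgv v hvu]⟩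
    · refine wnd_aux G _ _ Set.diff_subset (fun v => f v ≠ 0) (fun v => g v ≠ 0) ?_
      intro v hv hne
      have hvu : v ≠ u' := fun h => hne (h ▸ hu')
      exact ⟨⟨hv, hvu⟩, by show g v ≠ 0; rwa [hgv v hvu]⟩
  · unfold SND
    rw [hN, hP]
    exact Nat.add_le_add (snd_aux G _ u' v' hadj hv') le_rfl

/-- on a finite connected simple graph, if `f` vanishes at some vertex
but is not identically zero, then there are adjacent vertices `u'`, `v'` with
`f u' = 0` and `f v' ≠ 0`, and the partial signing obtained by resetting the value
at `u'` to `f v'` does not decrease `WND` and does not increase `SND`. -/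
theorem stmt_15 {V : Type*} [Fintype V] [DecidableEq V] (G : SimpleGraph V)
    (hconn : G.Connected) (f : V → ℝ) (u : V) (hu : f u = 0) (hf : f ≠ 0) :
    ∃ u' v' : V, G.Adj u' v' ∧ f u' = 0 ∧ f v' ≠ 0 ∧
      WND G f ≤ WND G (Function.update f u' (f v')) ∧
      SND G (Function.update f u' (f v')) ≤ SND G f := by
  obtain ⟨w, hw⟩ : ∃ w, f w ≠ 0 := by
    by_contra h
    push_neg at h
    exact hf (funext h)
  obtain ⟨u', v', hadj, h0, hne⟩ := exists_edge G f ((hconn.preconnected u w).some) hu hw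
  refine ⟨u', v', hadj, h0, hne, ?_⟩
  rcases hne.lt_or_gt with hv | hv
  · -- f v' < 0 : use negation trick
    have h2 : 0 < (-f) v' := by simpa using hv
    obtain ⟨hW, hS⟩ := main_lemma G (-f) u' v' hadj (by simp [h0]) h2
    have he : Function.update (-f) u' ((-f) v') = -(Function.update f u' (f v')) := by
      funext x
      by_cases hx : x = u'
      · subst hx; simp
      · simp [Function.update_of_ne hx]
    rw [he, WND_neg, WND_neg] at hW
    rw [he, SND_neg, SND_neg] at hS
    exact ⟨hW, hS⟩
  · exact main_lemma G f u' v' hadj h0 hv
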